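/- arXiv:1407.5101 — 2 statements merged into one kernel-verified Lean document; each statement's English description precedes it below -/
import Mathlib

section
/- Let L : ℝ⁴ → ℝ⁴ be the linear map given in 2×2 block form by L = [[B_N, X],[0, Y]], where B_N = diag(λ^N, λ^{−N}) with λ > 1, Y is invertible, N is a positive integer with (‖Y‖ + 1) < λ^N/100 and ‖Y^{−1}‖ < λ^N/100, and ‖X‖ < K for some K > 0. Then there exist γ₁, γ₂ > 0 such that the cone C^u(E₁,γ₁,γ₂) = {v ∈ ℝ⁴ : |v₂| ≤ γ₂|v₁| and |v₃|, |v₄| ≤ γ₁|v₁|} is L-invariant, i.e. L(C^u(E₁,γ₁,γ₂)) ⊆ C^u(E₁,γ₁,γ₂). -/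
set_option maxHeartbeats 1000000


noncomputable section

namespace ConeInvariance

/-- Euclidean `ℝ²`. -/
abbrev E2 : Type := EuclideanSpace ℝ (Fin 2)

/-- Euclidean `ℝ⁴`. -/
abbrev E4 : Type := EuclideanSpace ℝ (Fin 4)

/-- The last two coordinates of a vector of `ℝ⁴`, as a vector of `ℝ²`. -/
def tail (v : E4) : E2 := (WithLp.equiv 2 (Fin 2 → ℝ)).symm ![v 2, v 3]

/-- The cone `C^u(E₁, γ₁, γ₂) = {v : |v₂| ≤ γ₂|v₁|, |v₃|,|v₄| ≤ γ₁|v₁|}` around the line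
`E₁ = ℝ·e₁`. -/
def cone (γ₁ γ₂ : ℝ) : Set E4 :=
  {v | |v 1| ≤ γ₂ * |v 0| ∧ |v 2| ≤ γ₁ * |v 0| ∧ |v 3| ≤ γ₁ * |v 0|}

lemma abs_coord_le (x : E2) (i : Fin 2) : |x i| ≤ ‖x‖ := by
  rw [EuclideanSpace.norm_eq, Fin.sum_univ_two]
  rw [show |x i| = Real.sqrt (|x i| ^ 2) by rw [Real.sqrt_sq (abs_nonneg _)]]
  apply Real.sqrt_le_sqrt
  fin_cases i <;> simp [Real.norm_eq_abs] <;> positivity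

lemma norm_le_sum (x : E2) : ‖x‖ ≤ |x 0| + |x 1| := by
  rw [EuclideanSpace.norm_eq, Fin.sum_univ_two]
  rw [show |x 0| + |x 1| = Real.sqrt ((|x 0| + |x 1|) ^ 2) by
    rw [Real.sqrt_sq (by positivity)]]
  apply Real.sqrt_le_sqrt
  simp [Real.norm_eq_abs]
  nlinarith [abs_nonneg (x 0), abs_nonneg (x 1), sq_abs (x 0), sq_abs (x 1)]

/-- Proposition on invariance of cones, item 1. Let
`L = [[B_N, X], [0, Y]] : ℝ⁴ → ℝ⁴` in block form, with `B_N = diag(λ^N, λ^{-N})`, `λ > 1`,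
`Y` invertible, `(‖Y‖+1) < λ^N/100`, `‖Y⁻¹‖ < λ^N/100` and `‖X‖ < K`. Then there are
`γ₁, γ₂ > 0` such that the cone `C^u(E₁, γ₁, γ₂)` is `L`-invariant. -/
theorem cone_invariance
    (lam : ℝ) (hlam : 1 < lam) (N : ℕ) (hN : 0 < N)
    (X : E2 →L[ℝ] E2) (Y : E2 ≃L[ℝ] E2)
    (K : ℝ) (hK : 0 < K) (hX : ‖X‖ < K)
    (hY : ‖(Y : E2 →L[ℝ] E2)‖ + 1 < lam ^ N / 100)
    (hYinv : ‖(Y.symm : E2 →L[ℝ] E2)‖ < lam ^ N / 100)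
    (L : E4 →L[ℝ] E4)
    (hL : ∀ v : E4,
      L v 0 = lam ^ N * v 0 + X (tail v) 0 ∧
      L v 1 = lam⁻¹ ^ N * v 1 + X (tail v) 1 ∧
      L v 2 = Y (tail v) 0 ∧
      L v 3 = Y (tail v) 1) :
    ∃ γ₁ > (0 : ℝ), ∃ γ₂ > (0 : ℝ), ∀ v ∈ cone γ₁ γ₂, L v ∈ cone γ₁ γ₂ := by
  have hlamN : (100 : ℝ) < lam ^ N := by
    have := norm_nonneg (Y : E2 →L[ℝ] E2)
    linarith
  have hlamNpos : (0 : ℝ) < lam ^ N := by linarith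
  have hinv : lam⁻¹ ^ N * lam ^ N = 1 := by
    rw [← mul_pow, inv_mul_cancel₀ (by linarith : lam ≠ 0), one_pow]
  refine ⟨lam ^ N / (4 * K), by positivity, lam ^ N / 4, by positivity, ?_⟩
  intro v hv
  set γ₁ := lam ^ N / (4 * K) with hγ₁
  set γ₂ := lam ^ N / 4 with hγ₂
  obtain ⟨h1, h2, h3⟩ := hv
  obtain ⟨e0, e1, e2, e3⟩ := hL v
  set t := tail v with ht
  set a := |v 0| with ha
  have ha0 : (0 : ℝ) ≤ a := abs_nonneg _
  have ht0 : t 0 = v 2 := by simp [ht, tail]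
  have ht1 : t 1 = v 3 := by simp [ht, tail]
  have htn : ‖t‖ ≤ 2 * γ₁ * a := by
    have := norm_le_sum t
    rw [ht0, ht1] at this
    linarith
  have hXt : ∀ i : Fin 2, |X t i| ≤ (lam ^ N / 2) * a := by
    intro i
    have h1' : |X t i| ≤ ‖X t‖ := abs_coord_le _ i
    have h2' : ‖X t‖ ≤ ‖X‖ * ‖t‖ := X.le_opNorm t
    have h3' : ‖X‖ * ‖t‖ ≤ K * (2 * γ₁ * a) := by
      apply mul_le_mul (le_of_lt hX) htn (norm_nonneg _) (le_of_lt hK)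
    have : K * (2 * γ₁ * a) = (lam ^ N / 2) * a := by
      rw [hγ₁]; field_simp; ring
    linarith
  have hYt : ∀ i : Fin 2, |Y t i| ≤ (lam ^ N / 100) * (2 * γ₁ * a) := by
    intro i
    have h1' : |Y t i| ≤ ‖Y t‖ := abs_coord_le _ i
    have h2' : ‖Y t‖ ≤ ‖(Y : E2 →L[ℝ] E2)‖ * ‖t‖ :=
      (Y : E2 →L[ℝ] E2).le_opNorm t
    have h3' : ‖(Y : E2 →L[ℝ] E2)‖ * ‖t‖ ≤ (lam ^ N / 100) * (2 * γ₁ * a) := by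
      apply mul_le_mul (by linarith) htn (norm_nonneg _) (by positivity)
    linarith
  have hL0 : (lam ^ N / 2) * a ≤ |L v 0| := by
    rw [e0]
    have h1' : |X t 0| ≤ (lam ^ N / 2) * a := hXt 0
    have h2' := abs_add_le (lam ^ N * v 0 + X t 0) (-(X t 0))
    simp only [add_neg_cancel_right, abs_neg] at h2'
    have habs : |lam ^ N * v 0| = lam ^ N * a := by
      rw [abs_mul, abs_of_pos hlamNpos, ha]
    linarith
  have hγ₁a : (0:ℝ) ≤ γ₁ * a := by positivity
  refine ⟨?_, ?_, ?_⟩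
  · -- |L v 1| ≤ γ₂ * |L v 0|
    rw [e1]
    have hb : |lam⁻¹ ^ N * v 1 + X t 1| ≤ lam⁻¹ ^ N * (γ₂ * a) + (lam ^ N / 2) * a := by
      have := abs_add_le (lam⁻¹ ^ N * v 1) (X t 1)
      have h1' : |lam⁻¹ ^ N * v 1| ≤ lam⁻¹ ^ N * (γ₂ * a) := by
        rw [abs_mul, abs_of_pos (by positivity : (0:ℝ) < lam⁻¹ ^ N)]
        exact mul_le_mul_of_nonneg_left h1 (by positivity)
      have h2' := hXt 1
      linarith
    have key : lam⁻¹ ^ N * (γ₂ * a) + (lam ^ N / 2) * a ≤ γ₂ * ((lam ^ N / 2) * a) := by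
      rw [hγ₂]
      have hia : lam⁻¹ ^ N * (lam ^ N / 4 * a) = a / 4 := by
        rw [show lam⁻¹ ^ N * (lam ^ N / 4 * a) = (lam⁻¹ ^ N * lam ^ N) * (a / 4) by ring,
          hinv]; ring
      rw [hia]
      have hq : (1:ℝ)/4 + lam ^ N / 2 ≤ lam ^ N * lam ^ N / 8 := by nlinarith
      nlinarith [mul_le_mul_of_nonneg_right hq ha0]
    have hfin : γ₂ * ((lam ^ N / 2) * a) ≤ γ₂ * |L v 0| :=
      mul_le_mul_of_nonneg_left hL0 (by positivity)
    linarith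
  · rw [e2]
    have h1' := hYt 0
    have key : (lam ^ N / 100) * (2 * γ₁ * a) ≤ γ₁ * ((lam ^ N / 2) * a) := by nlinarith
    have hfin : γ₁ * ((lam ^ N / 2) * a) ≤ γ₁ * |L v 0| :=
      mul_le_mul_of_nonneg_left hL0 (by positivity)
    linarith
  · rw [e3]
    have h1' := hYt 1
    have key : (lam ^ N / 100) * (2 * γ₁ * a) ≤ γ₁ * ((lam ^ N / 2) * a) := by nlinarith
    have hfin : γ₁ * ((lam ^ N / 2) * a) ≤ γ₁ * |L v 0| :=
      mul_le_mul_of_nonneg_left hL0 (by positivity)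
    linarith

end ConeInvariance
end
end

section
/- Let L : ℝ⁴ → ℝ⁴ be the linear map given in 2×2 block form by L = [[B_N, X],[0, Y]], where B_N = diag(λ^N, λ^{−N}) with λ > 1, Y is invertible, N is a positive integer with (‖Y‖ + 1) < λ^N/100 and ‖Y^{−1}‖ < λ^N/100, and ‖X‖ < K for some K > 0. Then, with γ₁, γ₂ > 0 chosen so that the cone C^u = C^u(E₁,γ₁,γ₂) is L-invariant, there exists μ > 1 such that ‖Lv‖ ≥ μ‖v‖ for every v ∈ C^u. -/
noncomputable section

namespace ConeInvariance

lemma coord_le_norm2 (w : E2) (i : Fin 2) : |w i| ≤ ‖w‖ := by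
  rw [EuclideanSpace.norm_eq]
  rw [← Real.sqrt_sq_eq_abs]
  apply Real.sqrt_le_sqrt
  fin_cases i <;> simp [Fin.sum_univ_two, Real.norm_eq_abs, sq_abs] <;>
    nlinarith [sq_nonneg (w 0), sq_nonneg (w 1)]

lemma coord_le_norm4 (w : E4) (i : Fin 4) : |w i| ≤ ‖w‖ := by
  rw [EuclideanSpace.norm_eq]
  rw [← Real.sqrt_sq_eq_abs]
  apply Real.sqrt_le_sqrt
  fin_cases i <;> simp [Fin.sum_univ_four, Real.norm_eq_abs, sq_abs] <;>
    nlinarith [sq_nonneg (w 0), sq_nonneg (w 1), sq_nonneg (w 2), sq_nonneg (w 3)]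

lemma tail_apply0 (v : E4) : tail v 0 = v 2 := rfl
lemma tail_apply1 (v : E4) : tail v 1 = v 3 := rfl

lemma norm_tail_le (v : E4) : ‖tail v‖ ≤ |v 2| + |v 3| := by
  rw [EuclideanSpace.norm_eq]
  have h : ∑ i : Fin 2, ‖tail v i‖ ^ 2 = |v 2| ^ 2 + |v 3| ^ 2 := by
    simp [Fin.sum_univ_two, tail_apply0, tail_apply1, Real.norm_eq_abs]
  rw [h]
  have := abs_nonneg (v 2); have := abs_nonneg (v 3)
  rw [show |v 2| + |v 3| = Real.sqrt ((|v 2| + |v 3|) ^ 2) by rw [Real.sqrt_sq (by linarith)]]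
  apply Real.sqrt_le_sqrt
  nlinarith

lemma norm4_le (v : E4) (a : ℝ) (h0 : |v 0| ≤ a) (h1 : |v 1| ≤ a) (h2 : |v 2| ≤ a)
    (h3 : |v 3| ≤ a) : ‖v‖ ≤ 2 * a := by
  have ha : 0 ≤ a := le_trans (abs_nonneg _) h0
  rw [EuclideanSpace.norm_eq]
  rw [show (2:ℝ) * a = Real.sqrt ((2*a) ^ 2) by rw [Real.sqrt_sq (by linarith)]]
  apply Real.sqrt_le_sqrt
  simp only [Fin.sum_univ_four, Real.norm_eq_abs, sq_abs]
  nlinarith [abs_nonneg (v 0), abs_nonneg (v 1), abs_nonneg (v 2), abs_nonneg (v 3),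
    sq_abs (v 0), sq_abs (v 1), sq_abs (v 2), sq_abs (v 3)]

set_option maxHeartbeats 2000000 in
/-- Proposition on invariance of cones, items 1–2. Let
`L = [[B_N, X], [0, Y]] : ℝ⁴ → ℝ⁴` in block form, with `B_N = diag(λ^N, λ^{-N})`, `λ > 1`,
`Y` invertible, `(‖Y‖+1) < λ^N/100`, `‖Y⁻¹‖ < λ^N/100` and `‖X‖ < K`. Then, with `γ₁, γ₂ > 0`
chosen so that the cone `C^u(E₁, γ₁, γ₂)` is `L`-invariant, there exists `μ > 1` such that
`‖Lv‖ ≥ μ‖v‖` for every `v` in the cone. -/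
theorem cone_invariance_and_expansion
    (lam : ℝ) (hlam : 1 < lam) (N : ℕ) (hN : 0 < N)
    (X : E2 →L[ℝ] E2) (Y : E2 ≃L[ℝ] E2)
    (K : ℝ) (hK : 0 < K) (hX : ‖X‖ < K)
    (hY : ‖(Y : E2 →L[ℝ] E2)‖ + 1 < lam ^ N / 100)
    (hYinv : ‖(Y.symm : E2 →L[ℝ] E2)‖ < lam ^ N / 100)
    (L : E4 →L[ℝ] E4)
    (hL : ∀ v : E4,
      L v 0 = lam ^ N * v 0 + X (tail v) 0 ∧
      L v 1 = lam⁻¹ ^ N * v 1 + X (tail v) 1 ∧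
      L v 2 = Y (tail v) 0 ∧
      L v 3 = Y (tail v) 1) :
    ∃ γ₁ > (0 : ℝ), ∃ γ₂ > (0 : ℝ), (∀ v ∈ cone γ₁ γ₂, L v ∈ cone γ₁ γ₂) ∧
      ∃ μ > (1 : ℝ), ∀ v ∈ cone γ₁ γ₂, μ * ‖v‖ ≤ ‖L v‖ := by
  have hYn : (0:ℝ) ≤ ‖(Y : E2 →L[ℝ] E2)‖ := norm_nonneg _
  have hlamN : (100:ℝ) < lam ^ N := by linarith
  set γ₁ : ℝ := min 1 (1 / K) with hγ₁def
  have hγ₁pos : 0 < γ₁ := lt_min one_pos (by positivity)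
  have hγ₁le1 : γ₁ ≤ 1 := min_le_left _ _
  have hKγ₁ : K * γ₁ ≤ 1 := by
    have : γ₁ ≤ 1 / K := min_le_right _ _
    rw [le_div_iff₀ hK] at this; linarith [this]
  refine ⟨γ₁, hγ₁pos, 1, one_pos, ?_, 2, one_lt_two, ?_⟩
  all_goals {
    intro v hv
    obtain ⟨hv1, hv2, hv3⟩ := hv
    obtain ⟨hL0, hL1, hL2, hL3⟩ := hL v
    have h0 : (0:ℝ) ≤ |v 0| := abs_nonneg _
    -- bound on tail and X(tail)
    have htail : ‖tail v‖ ≤ 2 * γ₁ * |v 0| := by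
      have := norm_tail_le v; nlinarith
    have hXn : ‖X (tail v)‖ ≤ K * (2 * γ₁ * |v 0|) := by
      calc ‖X (tail v)‖ ≤ ‖X‖ * ‖tail v‖ := X.le_opNorm _
        _ ≤ K * (2 * γ₁ * |v 0|) := by
            apply mul_le_mul (le_of_lt hX) htail (norm_nonneg _) (le_of_lt hK)
    have hX0 : |X (tail v) 0| ≤ 2 * |v 0| := by
      have := coord_le_norm2 (X (tail v)) 0; nlinarith
    have hX1 : |X (tail v) 1| ≤ 2 * |v 0| := by
      have := coord_le_norm2 (X (tail v)) 1; nlinarith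
    -- lower bound on |L v 0|
    have hlow : lam ^ N * |v 0| - 2 * |v 0| ≤ |L v 0| := by
      rw [hL0]
      have h1 : lam ^ N * |v 0| - |X (tail v) 0| ≤ |lam ^ N * v 0 + X (tail v) 0| := by
        have := abs_add_le (lam ^ N * v 0 + X (tail v) 0) (-(X (tail v) 0))
        simp only [add_neg_cancel_right, abs_neg] at this
        have habs : |lam ^ N * v 0| = lam ^ N * |v 0| := by
          rw [abs_mul, abs_of_pos (by positivity)]
        linarith
      nlinarith
    have h98 : 98 * |v 0| ≤ |L v 0| := by nlinarith
    -- invariance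
    have hinv : L v ∈ cone γ₁ 1 := by
      refine ⟨?_, ?_, ?_⟩
      · rw [hL1]
        have hinvN : lam⁻¹ ^ N ≤ 1 := by
          apply pow_le_one₀ (by positivity)
          rw [inv_le_one_iff₀]; right; linarith
        have h1 : |lam⁻¹ ^ N * v 1 + X (tail v) 1| ≤ lam⁻¹ ^ N * |v 1| + |X (tail v) 1| := by
          have := abs_add_le (lam⁻¹ ^ N * v 1) (X (tail v) 1)
          rw [abs_mul, abs_of_nonneg (by positivity : (0:ℝ) ≤ lam⁻¹ ^ N)] at this
          exact this
        have h2 : |v 1| ≤ |v 0| := by nlinarith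
        have h3 : lam⁻¹ ^ N * |v 1| ≤ |v 1| := by nlinarith [abs_nonneg (v 1)]
        nlinarith [h98]
      · rw [hL2]
        have h1 : |Y (tail v) 0| ≤ ‖(Y : E2 →L[ℝ] E2)‖ * ‖tail v‖ := by
          calc |Y (tail v) 0| ≤ ‖Y (tail v)‖ := coord_le_norm2 _ 0
            _ ≤ _ := (Y : E2 →L[ℝ] E2).le_opNorm _
        have h2 : ‖(Y : E2 →L[ℝ] E2)‖ * ‖tail v‖ ≤ (lam ^ N / 100) * (2 * γ₁ * |v 0|) := by
          apply mul_le_mul (by linarith) htail (norm_nonneg _) (by positivity)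
        nlinarith [mul_le_mul_of_nonneg_left hlow hγ₁pos.le,
          mul_nonneg (mul_nonneg hγ₁pos.le h0) (by linarith : (0:ℝ) ≤ lam ^ N - 100),
          mul_nonneg hγ₁pos.le h0]
      · rw [hL3]
        have h1 : |Y (tail v) 1| ≤ ‖(Y : E2 →L[ℝ] E2)‖ * ‖tail v‖ := by
          calc |Y (tail v) 1| ≤ ‖Y (tail v)‖ := coord_le_norm2 _ 1
            _ ≤ _ := (Y : E2 →L[ℝ] E2).le_opNorm _
        have h2 : ‖(Y : E2 →L[ℝ] E2)‖ * ‖tail v‖ ≤ (lam ^ N / 100) * (2 * γ₁ * |v 0|) := by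
          apply mul_le_mul (by linarith) htail (norm_nonneg _) (by positivity)
        nlinarith [mul_le_mul_of_nonneg_left hlow hγ₁pos.le,
          mul_nonneg (mul_nonneg hγ₁pos.le h0) (by linarith : (0:ℝ) ≤ lam ^ N - 100),
          mul_nonneg hγ₁pos.le h0]
    first
    | exact hinv
    | {
      refine le_trans ?_ (le_trans h98 (coord_le_norm4 (L v) 0))
      have hnv : ‖v‖ ≤ 2 * |v 0| := by
        apply norm4_le v |v 0| le_rfl (by nlinarith) (by nlinarith) (by nlinarith)
      nlinarith }
  }

end ConeInvariance
end
end
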